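/- Let A be a ring and I₁, …, Iₙ maximal left ideals such that the simple modules A/I₁, …, A/Iₙ are pairwise non-isomorphic. Then the natural map A → A/I₁ × ⋯ × A/Iₙ is surjective. -/

import Mathlib

/-- Key lemma: if the quotients are pairwise non-isomorphic simple modules, then
the intersection of the `I l` for `l ∈ S` is not contained in `I j` for `j ∉ S`. -/
lemma stmt_5_aux (A : Type) [Ring A] {ι : Type} [DecidableEq ι] (I : ι → Submodule A A)
    (hmax : ∀ j, IsCoatom (I j))
    (hni : ∀ j l, j ≠ l → IsEmpty ((A ⧸ I j) ≃ₗ[A] (A ⧸ I l)))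
    (S : Finset ι) (j : ι) (hj : j ∉ S) : ¬ (S.inf I ≤ I j) := by
  induction S using Finset.induction_on with
  | empty =>
      simp only [Finset.inf_empty]
      intro h
      exact (hmax j).1 (top_le_iff.mp h)
  | insert _ _ hk =>
      rename_i k S ih
      have hjk : j ≠ k := fun h => hj (h ▸ Finset.mem_insert_self k S)
      have hjS : j ∉ S := fun h => hj (Finset.mem_insert_of_mem h)
      have ih' := ih hjS
      rw [Finset.inf_insert]
      set J' : Submodule A A := S.inf I with hJ'
      by_cases hJk : J' ≤ I k
      · intro h
        exact ih' (le_trans (le_inf hJk le_rfl) h)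
      intro hcon
      -- build an isomorphism A⧸I k ≃ A⧸I j, contradiction
      haveI : IsSimpleModule A (A ⧸ I j) := isSimpleModule_iff_isCoatom.mpr (hmax j)
      haveI : IsSimpleModule A (A ⧸ I k) := isSimpleModule_iff_isCoatom.mpr (hmax k)
      let f : J' →ₗ[A] A ⧸ I j := (I j).mkQ ∘ₗ J'.subtype
      let g : J' →ₗ[A] A ⧸ I k := (I k).mkQ ∘ₗ J'.subtype
      have hfker : ∀ x : J', f x = 0 ↔ (x : A) ∈ I j := by
        intro x; simp [f, Submodule.Quotient.mk_eq_zero]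
      have hgker : ∀ x : J', g x = 0 ↔ (x : A) ∈ I k := by
        intro x; simp [g, Submodule.Quotient.mk_eq_zero]
      have hfsur : Function.Surjective f := by
        rw [← LinearMap.range_eq_top]
        rcases eq_bot_or_eq_top (LinearMap.range f) with h | h
        · exfalso
          apply ih'
          intro x hx
          have hm : f ⟨x, hx⟩ ∈ LinearMap.range f := LinearMap.mem_range_self f ⟨x, hx⟩
          rw [h] at hm
          exact (hfker ⟨x, hx⟩).mp (by simpa using hm)
        · exact h
      have hgsur : Function.Surjective g := by
        rw [← LinearMap.range_eq_top]
        rcases eq_bot_or_eq_top (LinearMap.range g) with h | h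
        · exfalso
          apply hJk
          intro x hx
          have hm : g ⟨x, hx⟩ ∈ LinearMap.range g := LinearMap.mem_range_self g ⟨x, hx⟩
          rw [h] at hm
          exact (hgker ⟨x, hx⟩).mp (by simpa using hm)
        · exact h
      have hker : LinearMap.ker g ≤ LinearMap.ker f := by
        intro x hx
        rw [LinearMap.mem_ker] at hx ⊢
        rw [hfker]
        rw [hgker] at hx
        exact hcon ⟨hx, x.2⟩
      let f' : (J' ⧸ LinearMap.ker g) →ₗ[A] A ⧸ I j := (LinearMap.ker g).liftQ f hker
      have hf'sur : Function.Surjective f' := by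
        intro y
        obtain ⟨x, hx⟩ := hfsur y
        exact ⟨(LinearMap.ker g).mkQ x, by simpa [f'] using hx⟩
      let e : (J' ⧸ LinearMap.ker g) ≃ₗ[A] A ⧸ I k := g.quotKerEquivOfSurjective hgsur
      let h : (A ⧸ I k) →ₗ[A] A ⧸ I j := f' ∘ₗ (e.symm : (A ⧸ I k) →ₗ[A] J' ⧸ LinearMap.ker g)
      have hhsur : Function.Surjective h := by
        intro y
        obtain ⟨x, hx⟩ := hf'sur y
        exact ⟨e x, by simpa [h] using hx⟩
      have hhinj : Function.Injective h := by
        rw [← LinearMap.ker_eq_bot]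
        rcases eq_bot_or_eq_top (LinearMap.ker h) with h1 | h1
        · exact h1
        · exfalso
          haveI : Nontrivial (A ⧸ I j) := Submodule.Quotient.nontrivial_iff.mpr (hmax j).1
          obtain ⟨y, hy⟩ := exists_ne (0 : A ⧸ I j)
          obtain ⟨x, hx⟩ := hhsur y
          have : h x = 0 := by
            have : x ∈ LinearMap.ker h := h1 ▸ Submodule.mem_top
            simpa using this
          exact hy (hx ▸ this)
      exact (hni k j hjk.symm).false (LinearEquiv.ofBijective h ⟨hhinj, hhsur⟩)

/-- Chinese Remainder Theorem for pairwise non-isomorphic simple quotients: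
if `I₁, …, Iₙ` are maximal left ideals with pairwise non-isomorphic simple
quotients, then the natural map `A → A/I₁ × ⋯ × A/Iₙ` is surjective. -/
theorem stmt_5 (A : Type) [Ring A] (n : ℕ) (I : Fin n → Submodule A A)
    (hmax : ∀ j, IsCoatom (I j))
    (hni : ∀ j l, j ≠ l → IsEmpty ((A ⧸ I j) ≃ₗ[A] (A ⧸ I l))) :
    Function.Surjective
      (fun a : A => fun j : Fin n => (Submodule.Quotient.mk a : A ⧸ I j)) := by
  -- for each j, find e j ≡ 1 mod I j and e j ∈ I l for l ≠ j
  have key : ∀ j : Fin n, ∃ e : A, (1 - e) ∈ I j ∧ ∀ l, l ≠ j → e ∈ I l := by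
    intro j
    set S := Finset.univ.erase j with hS
    have hne : ¬ (S.inf I ≤ I j) :=
      stmt_5_aux A I hmax hni S j (Finset.notMem_erase j _)
    have htop : S.inf I ⊔ I j = ⊤ :=
      (hmax j).2 _ (lt_of_le_of_ne le_sup_right
        (fun h => hne (le_sup_left.trans_eq h.symm)))
    have h1 : (1 : A) ∈ S.inf I ⊔ I j := htop ▸ Submodule.mem_top
    obtain ⟨e, he, i, hi, hei⟩ := Submodule.mem_sup.mp h1
    refine ⟨e, ?_, ?_⟩
    · have : (1 : A) - e = i := by rw [← hei, add_sub_cancel_left]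
      exact this ▸ hi
    · intro l hl
      have : l ∈ S := Finset.mem_erase.mpr ⟨hl, Finset.mem_univ l⟩
      exact Finset.inf_le (f := I) this he
  choose e he1 he2 using key
  intro b
  choose c hc using fun j => Submodule.Quotient.mk_surjective (I j) (b j)
  refine ⟨∑ j, c j * e j, ?_⟩
  funext l
  simp only
  have : (Submodule.Quotient.mk (∑ j, c j * e j) : A ⧸ I l)
      = ∑ j, (Submodule.Quotient.mk (c j * e j) : A ⧸ I l) := by
    rw [← Submodule.mkQ_apply, map_sum]
    simp [Submodule.mkQ_apply]
  rw [this, Finset.sum_eq_single l]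
  · have : c l * e l - c l = -(c l * (1 - e l)) := by noncomm_ring
    have hmem : c l * e l - c l ∈ I l := by
      rw [this]
      exact Submodule.neg_mem _ (Submodule.smul_mem _ (c l) (he1 l))
    calc (Submodule.Quotient.mk (c l * e l) : A ⧸ I l)
        = Submodule.Quotient.mk (c l) := (Submodule.Quotient.eq _).mpr hmem
      _ = b l := hc l
  · intro j _ hj
    rw [Submodule.Quotient.mk_eq_zero]
    exact Submodule.smul_mem _ (c j) (he2 j l (Ne.symm hj))
  · intro h; exact absurd (Finset.mem_univ l) h
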